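/- Fix 0 < β ≤ 1. If f : (−1,1) → ℝ is odd (f(−x) = −f(x)) and strictly increasing, then the defining series for T_β f(x) converges absolutely for every x ∈ (−1,1), and the function T_β f is odd and strictly increasing on (−1,1). -/

import Mathlib

open Real

/-- The subtransfer operator `T_β` of the Gauss-type map `x ↦ {-β/x} mod 2ℤ`. -/
noncomputable def Tsub (β : ℝ) (f : ℝ → ℝ) (x : ℝ) : ℝ :=
  ∑' j : {j : ℤ // j ≠ 0},
    (β / (2 * ((j : ℤ) : ℝ) + x) ^ 2) * f (-β / (2 * ((j : ℤ) : ℝ) + x))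

namespace Stmt13Aux

lemma denom_lb {x : ℝ} (hx : |x| < 1) {j : ℤ} (hj : j ≠ 0) :
    2 * |(j : ℝ)| - |x| ≤ |2 * (j : ℝ) + x| := by
  have h3 : |2 * (j : ℝ)| ≤ |2 * (j : ℝ) + x| + |x| := by
    calc |2 * (j : ℝ)| = |(2 * (j : ℝ) + x) + (-x)| := by ring_nf
      _ ≤ |2 * (j : ℝ) + x| + |(-x)| := abs_add_le _ _
      _ = |2 * (j : ℝ) + x| + |x| := by rw [abs_neg]
  have h2 : |2 * (j : ℝ)| = 2 * |(j : ℝ)| := by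
    rw [abs_mul]; norm_num
  linarith

lemma one_le_absj {j : ℤ} (hj : j ≠ 0) : (1 : ℝ) ≤ |(j : ℝ)| := by
  have := Int.one_le_abs hj
  have : ((1:ℤ):ℝ) ≤ ((|j|:ℤ):ℝ) := by exact_mod_cast this
  simpa using this

lemma one_lt_denom {x : ℝ} (hx : |x| < 1) {j : ℤ} (hj : j ≠ 0) :
    1 < |2 * (j : ℝ) + x| := by
  have := denom_lb hx hj
  have := one_le_absj hj
  linarith

lemma denom_ne {x : ℝ} (hx : |x| < 1) {j : ℤ} (hj : j ≠ 0) :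
    2 * (j : ℝ) + x ≠ 0 := by
  have := one_lt_denom hx hj
  intro h
  rw [h] at this
  simp at this
  linarith

lemma sq_denom_lb {x : ℝ} (hx : |x| < 1) {j : ℤ} (hj : j ≠ 0) :
    ((j : ℝ))^2 ≤ (2 * (j : ℝ) + x)^2 := by
  have h1 := one_le_absj hj
  have h2 := denom_lb hx hj
  have h3 : |(j:ℝ)| ≤ |2 * (j : ℝ) + x| := by linarith
  calc ((j : ℝ))^2 = |(j:ℝ)|^2 := (sq_abs _).symm
    _ ≤ |2 * (j : ℝ) + x|^2 := by gcongr
    _ = (2 * (j : ℝ) + x)^2 := sq_abs _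

lemma arg_abs_le {β x : ℝ} (hβ0 : 0 < β) (hx : |x| < 1) {j : ℤ} (hj : j ≠ 0) :
    |-β / (2 * (j : ℝ) + x)| ≤ β / (2 - |x|) := by
  have h2 := denom_lb hx hj
  have h1 := one_le_absj hj
  have hd : 2 - |x| ≤ |2 * (j : ℝ) + x| := by linarith
  have hpos : (0:ℝ) < 2 - |x| := by linarith
  rw [abs_div, abs_neg, abs_of_pos hβ0]
  gcongr

lemma arg_mem {β x : ℝ} (hβ0 : 0 < β) (hβ1 : β ≤ 1) (hx : |x| < 1) {j : ℤ} (hj : j ≠ 0) :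
    -β / (2 * (j : ℝ) + x) ∈ Set.Ioo (-1 : ℝ) 1 := by
  have h := arg_abs_le hβ0 hx hj
  have h2 : β / (2 - |x|) < 1 := by
    rw [div_lt_one (by linarith)]
    linarith
  have := abs_lt.mp (lt_of_le_of_lt h h2)
  exact ⟨this.1, this.2⟩

end Stmt13Aux

namespace Stmt13Aux

lemma term_lt {β : ℝ} (hβ0 : 0 < β) (hβ1 : β ≤ 1) {f : ℝ → ℝ}
    (hodd : ∀ x ∈ Set.Ioo (-1 : ℝ) 1, f (-x) = -f x)
    (hmono : StrictMonoOn f (Set.Ioo (-1 : ℝ) 1))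
    {x y : ℝ} (hx : x ∈ Set.Ioo (-1 : ℝ) 1) (hy : y ∈ Set.Ioo (-1 : ℝ) 1)
    (hxy : x < y) {j : ℤ} (hj : j ≠ 0) :
    (β / (2 * (j : ℝ) + x) ^ 2) * f (-β / (2 * (j : ℝ) + x)) <
      (β / (2 * (j : ℝ) + y) ^ 2) * f (-β / (2 * (j : ℝ) + y)) := by
  obtain ⟨hx1, hx2⟩ := hx
  obtain ⟨hy1, hy2⟩ := hy
  have hax : |x| < 1 := abs_lt.mpr ⟨hx1, hx2⟩
  have hay : |y| < 1 := abs_lt.mpr ⟨hy1, hy2⟩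
  have f0 : f 0 = 0 := by
    have := hodd 0 ⟨by norm_num, by norm_num⟩
    simp at this
    linarith
  have hmem0 : (0:ℝ) ∈ Set.Ioo (-1:ℝ) 1 := ⟨by norm_num, by norm_num⟩
  have hmu := arg_mem hβ0 hβ1 hax hj
  have hmv := arg_mem hβ0 hβ1 hay hj
  set u := 2 * (j : ℝ) + x with hu_def
  set v := 2 * (j : ℝ) + y with hv_def
  have huv : u < v := by simp only [hu_def, hv_def]; linarith
  rcases hj.lt_or_gt with hneg | hpos
  · -- j ≤ -1 : u < v < -1
    have hjle : j ≤ -1 := by omega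
    have hj1 : (j : ℝ) ≤ -1 := by exact_mod_cast hjle
    have hv1 : v < -1 := by simp only [hv_def]; linarith
    have hu1 : u < -1 := lt_trans huv hv1
    have hun : u < 0 := by linarith
    have hvn : v < 0 := by linarith
    have e1 : -β / u = β / (-u) := by rw [div_neg, neg_div]
    have e2 : -β / v = β / (-v) := by rw [div_neg, neg_div]
    have harg : -β / u < -β / v := by
      rw [e1, e2]
      exact div_lt_div_of_pos_left hβ0 (by linarith) (by linarith)
    have hb1 : 0 < f (-β / u) := by
      have : f 0 < f (-β / u) := hmono hmem0 hmu (by rw [e1]; exact div_pos hβ0 (by linarith))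
      linarith [f0 ▸ this]
    have hb2 : f (-β / u) < f (-β / v) := hmono hmu hmv harg
    have ha : β / u ^ 2 < β / v ^ 2 := by
      have hsq : v ^ 2 < u ^ 2 := by nlinarith
      have hv2 : (0:ℝ) < v ^ 2 := by nlinarith
      exact div_lt_div_of_pos_left hβ0 hv2 hsq
    have ha0 : 0 < β / u ^ 2 := div_pos hβ0 (by nlinarith)
    exact mul_lt_mul'' ha hb2 ha0.le hb1.le
  · -- 1 ≤ j : 1 < u < v
    have hj1 : (1 : ℝ) ≤ (j : ℝ) := by exact_mod_cast hpos
    have hu1 : (1:ℝ) < u := by simp only [hu_def]; linarith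
    have hv1 : (1:ℝ) < v := lt_trans hu1 huv
    have harg : -β / u < -β / v := by
      rw [neg_div, neg_div, neg_lt_neg_iff]
      exact div_lt_div_of_pos_left hβ0 (by linarith) huv
    have hb1 : f (-β / u) < f (-β / v) := hmono hmu hmv harg
    have hb2 : f (-β / v) < 0 := by
      have : f (-β / v) < f 0 :=
        hmono hmv hmem0 (div_neg_of_neg_of_pos (by linarith) (by linarith))
      linarith [f0 ▸ this]
    have ha : β / v ^ 2 ≤ β / u ^ 2 :=
      div_le_div_of_nonneg_left hβ0.le (by nlinarith) (by nlinarith)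
    have ha0 : 0 < β / u ^ 2 := div_pos hβ0 (by nlinarith)
    calc (β / u ^ 2) * f (-β / u) < (β / u ^ 2) * f (-β / v) :=
          mul_lt_mul_of_pos_left hb1 ha0
      _ ≤ (β / v ^ 2) * f (-β / v) := mul_le_mul_of_nonpos_right ha hb2.le

end Stmt13Aux

namespace Stmt13Aux

lemma summable_abs {β : ℝ} (hβ0 : 0 < β) (hβ1 : β ≤ 1) {f : ℝ → ℝ}
    (hmono : StrictMonoOn f (Set.Ioo (-1 : ℝ) 1))
    {x : ℝ} (hx : x ∈ Set.Ioo (-1 : ℝ) 1) :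
    Summable (fun j : {j : ℤ // j ≠ 0} =>
      |(β / (2 * ((j : ℤ) : ℝ) + x) ^ 2) * f (-β / (2 * ((j : ℤ) : ℝ) + x))|) := by
  have hax : |x| < 1 := abs_lt.mpr ⟨hx.1, hx.2⟩
  set c : ℝ := β / (2 - |x|) with hc_def
  have hcpos : 0 < c := div_pos hβ0 (by linarith [abs_nonneg x])
  have hc1 : c < 1 := by
    rw [hc_def, div_lt_one (by linarith)]
    linarith
  have hmc : -c ∈ Set.Ioo (-1:ℝ) 1 := ⟨by linarith, by linarith⟩
  have hpc : c ∈ Set.Ioo (-1:ℝ) 1 := ⟨by linarith, by linarith⟩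
  set M : ℝ := max |f (-c)| |f c| with hM_def
  have hM0 : 0 ≤ M := le_trans (abs_nonneg _) (le_max_left _ _)
  have hbound : ∀ j : {j : ℤ // j ≠ 0},
      |(β / (2 * ((j : ℤ) : ℝ) + x) ^ 2) * f (-β / (2 * ((j : ℤ) : ℝ) + x))| ≤
        (β * M) * (1 / ((j : ℤ) : ℝ) ^ 2) := by
    rintro ⟨j, hj⟩
    have hj1 := one_le_absj hj
    have hsq := sq_denom_lb hax hj
    have hjsq : (0:ℝ) < ((j:ℤ):ℝ)^2 := by
      have : ((j:ℤ):ℝ) ≠ 0 := by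
        intro h; apply hj; exact_mod_cast h
      positivity
    have hdsq : (0:ℝ) < (2 * (j : ℝ) + x)^2 := lt_of_lt_of_le hjsq hsq
    have hargle := arg_abs_le hβ0 hax hj
    set t := -β / (2 * (j : ℝ) + x) with ht_def
    have htm : t ∈ Set.Ioo (-1:ℝ) 1 := arg_mem hβ0 hβ1 hax hj
    have habs := abs_le.mp hargle
    have hft : |f t| ≤ M := by
      have h1 : f (-c) ≤ f t := hmono.monotoneOn hmc htm habs.1
      have h2 : f t ≤ f c := hmono.monotoneOn htm hpc habs.2
      refine abs_le.mpr ⟨?_, ?_⟩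
      · have := neg_abs_le (f (-c))
        have := le_max_left |f (-c)| |f c|
        linarith
      · have := le_abs_self (f c)
        have := le_max_right |f (-c)| |f c|
        linarith
    have hdiv : β / (2 * (j : ℝ) + x)^2 ≤ β / ((j:ℤ):ℝ)^2 :=
      div_le_div_of_nonneg_left hβ0.le hjsq hsq
    calc |(β / (2 * (j : ℝ) + x) ^ 2) * f t|
        = (β / (2 * (j : ℝ) + x) ^ 2) * |f t| := by
          rw [abs_mul, abs_of_nonneg (le_of_lt (div_pos hβ0 hdsq))]
      _ ≤ (β / ((j:ℤ):ℝ)^2) * M := by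
          apply mul_le_mul hdiv hft (abs_nonneg _) (le_of_lt (div_pos hβ0 hjsq))
      _ = (β * M) * (1 / ((j : ℤ) : ℝ) ^ 2) := by ring
  have base : Summable (fun n : ℤ => (β * M) * (1 / (n:ℝ)^2)) :=
    (Real.summable_one_div_int_pow.mpr one_lt_two).mul_left _
  have hmaj : Summable (fun j : {j : ℤ // j ≠ 0} => (β * M) * (1 / ((j : ℤ) : ℝ)^2)) := by
    exact base.subtype {j : ℤ | j ≠ 0}
  exact Summable.of_nonneg_of_le (fun j => abs_nonneg _) hbound hmaj

end Stmt13Aux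

open Stmt13Aux

/-- `T_β` preserves the class of odd strictly increasing functions on `(-1,1)`. -/
theorem stmt_13 (β : ℝ) (hβ0 : 0 < β) (hβ1 : β ≤ 1)
    (f : ℝ → ℝ)
    (hodd : ∀ x ∈ Set.Ioo (-1 : ℝ) 1, f (-x) = -f x)
    (hmono : StrictMonoOn f (Set.Ioo (-1 : ℝ) 1)) :
    (∀ x ∈ Set.Ioo (-1 : ℝ) 1,
      Summable (fun j : {j : ℤ // j ≠ 0} =>
        |(β / (2 * ((j : ℤ) : ℝ) + x) ^ 2) * f (-β / (2 * ((j : ℤ) : ℝ) + x))|)) ∧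
    (∀ x ∈ Set.Ioo (-1 : ℝ) 1, Tsub β f (-x) = -(Tsub β f x)) ∧
    StrictMonoOn (Tsub β f) (Set.Ioo (-1 : ℝ) 1) := by
  refine ⟨fun x hx => summable_abs hβ0 hβ1 hmono hx, ?_, ?_⟩
  · -- oddness
    intro x hx
    have hax : |x| < 1 := abs_lt.mpr ⟨hx.1, hx.2⟩
    let e : {j : ℤ // j ≠ 0} ≃ {j : ℤ // j ≠ 0} :=
      ⟨fun j => ⟨-j.1, neg_ne_zero.mpr j.2⟩, fun j => ⟨-j.1, neg_ne_zero.mpr j.2⟩,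
        fun j => by simp, fun j => by simp⟩
    unfold Tsub
    rw [← e.tsum_eq (fun j : {j : ℤ // j ≠ 0} =>
      (β / (2 * ((j : ℤ) : ℝ) + -x) ^ 2) * f (-β / (2 * ((j : ℤ) : ℝ) + -x)))]
    rw [← tsum_neg]
    apply tsum_congr
    rintro ⟨j, hj⟩
    have hcast : (((e ⟨j, hj⟩ : {j : ℤ // j ≠ 0}) : ℤ) : ℝ) = -(j : ℝ) := by
      simp [e]
    have hne : 2 * (j : ℝ) + x ≠ 0 := denom_ne hax hj
    have e1 : 2 * (-(j : ℝ)) + -x = -(2 * (j : ℝ) + x) := by ring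
    have htm : -β / (2 * (j : ℝ) + x) ∈ Set.Ioo (-1:ℝ) 1 := arg_mem hβ0 hβ1 hax hj
    have hf : f (-β / -(2 * (j : ℝ) + x)) = -f (-β / (2 * (j : ℝ) + x)) := by
      have harg : -β / -(2 * (j : ℝ) + x) = -(-β / (2 * (j : ℝ) + x)) := by
        rw [div_neg]
      rw [harg, hodd _ htm]
    simp only [hcast, e1]
    rw [hf, neg_pow, neg_pow]
    ring
  · -- strict monotonicity
    intro x hx y hy hxy
    have hsx : Summable (fun j : {j : ℤ // j ≠ 0} =>
        (β / (2 * ((j : ℤ) : ℝ) + x) ^ 2) * f (-β / (2 * ((j : ℤ) : ℝ) + x))) :=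
      (summable_abs hβ0 hβ1 hmono hx).of_abs
    have hsy : Summable (fun j : {j : ℤ // j ≠ 0} =>
        (β / (2 * ((j : ℤ) : ℝ) + y) ^ 2) * f (-β / (2 * ((j : ℤ) : ℝ) + y))) :=
      (summable_abs hβ0 hβ1 hmono hy).of_abs
    exact Summable.tsum_lt_tsum
      (fun j => (term_lt hβ0 hβ1 hodd hmono hx hy hxy j.2).le)
      (term_lt hβ0 hβ1 hodd hmono hx hy hxy (one_ne_zero : (1:ℤ) ≠ 0)
        : _ < ((fun j : {j : ℤ // j ≠ 0} =>
          (β / (2 * ((j : ℤ) : ℝ) + y) ^ 2) * f (-β / (2 * ((j : ℤ) : ℝ) + y))) ⟨1, one_ne_zero⟩))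
      hsx hsy
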